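/- For every positive integer j and every integer n ≥ 2, Σ_{k=1}^{n-1} ((-1)^{k+1}/k^j) C(n-1, k) = Σ_{1 ≤ k_1 ≤ ... ≤ k_j ≤ n-1} 1/(k_1 ⋯ k_j), where the right-hand sum extends over all nondecreasing j-tuples of integers between 1 and n-1. -/

import Mathlib

open Finset

noncomputable def Saux (j m : ℕ) : ℝ :=
  ∑ k ∈ Finset.Icc 1 m, (-1 : ℝ) ^ (k + 1) / (k : ℝ) ^ j * (m.choose k : ℝ)

noncomputable def Taux : ℕ → ℕ → ℝ
  | 0, _ => 1
  | j + 1, m => ∑ k ∈ Finset.Icc 1 m, Taux j k / (k : ℝ)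

lemma Saux_zero (m : ℕ) (hm : 1 ≤ m) : Saux 0 m = 1 := by
  have h := Int.alternating_sum_range_choose_of_ne (n := m) (by omega)
  have h' : (0:ℝ) = ((∑ i ∈ range (m + 1), (-1 : ℤ) ^ i * m.choose i : ℤ) : ℝ) := by
    rw [h]; norm_num
  push_cast at h'
  rw [Finset.range_eq_Ico, show Ico 0 (m+1) = insert 0 (Icc 1 m) from by
    ext x; simp; omega, Finset.sum_insert (by simp)] at h'
  simp only [pow_zero, Nat.choose_zero_right, Nat.cast_one, mul_one] at h'
  unfold Saux
  calc ∑ k ∈ Finset.Icc 1 m, (-1 : ℝ) ^ (k + 1) / (k : ℝ) ^ 0 * (m.choose k : ℝ)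
      = -∑ k ∈ Finset.Icc 1 m, (-1 : ℝ) ^ k * (m.choose k : ℝ) := by
        rw [← Finset.sum_neg_distrib]
        refine Finset.sum_congr rfl fun k hk => ?_
        rw [pow_succ]; ring
    _ = 1 := by
        have : ∑ k ∈ Finset.Icc 1 m, (-1 : ℝ) ^ k * (m.choose k : ℝ) = -1 := by linarith
        rw [this]; norm_num

lemma aux_alg (j : ℕ) (A D C Cm x mm : ℝ) (hx : x ≠ 0) (hm : mm ≠ 0)
    (h : mm * D = C * x) :
    A / x ^ (j+1) * (D + Cm) = A / x ^ (j+1) * Cm + (A / x ^ j * C) / mm := by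
  have hD : D = C * x / mm := by field_simp; linarith
  subst hD
  rw [pow_succ]
  field_simp
  ring

lemma Saux_succ_diff (j m : ℕ) :
    Saux (j + 1) (m + 1) = Saux (j + 1) m + Saux j (m + 1) / ((m:ℝ) + 1) := by
  unfold Saux
  have h1 : ∀ k ∈ Icc 1 (m+1), (-1:ℝ)^(k+1)/(k:ℝ)^(j+1) * ((m+1).choose k : ℝ)
      = (-1:ℝ)^(k+1)/(k:ℝ)^(j+1) * (m.choose k : ℝ)
        + ((-1:ℝ)^(k+1)/(k:ℝ)^j * ((m+1).choose k : ℝ)) / ((m:ℝ)+1) := by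
    intro k hk
    simp only [mem_Icc] at hk
    obtain ⟨k', rfl⟩ : ∃ k', k = k'+1 := ⟨k-1, by omega⟩
    have hc : ((m+1).choose (k'+1) : ℝ) = (m.choose k' : ℝ) + (m.choose (k'+1) : ℝ) := by
      rw [Nat.choose_succ_succ]; push_cast; ring
    have hmc : ((m:ℝ)+1) * (m.choose k' : ℝ) = ((m+1).choose (k'+1) : ℝ) * ((k':ℝ)+1) := by
      have := congrArg (Nat.cast (R := ℝ)) (Nat.add_one_mul_choose_eq m k')
      push_cast at this ⊢
      linarith
    have hk0 : ((k':ℝ)+1) ≠ 0 := by positivity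
    have hm0 : ((m:ℝ)+1) ≠ 0 := by positivity
    have h2 := aux_alg j ((-1:ℝ)^(k'+1+1)) ((m.choose k' : ℕ):ℝ) (((m+1).choose (k'+1) : ℕ):ℝ)
      ((m.choose (k'+1) : ℕ):ℝ) ((k':ℝ)+1) ((m:ℝ)+1) hk0 hm0 hmc
    rw [← hc] at h2
    push_cast at h2 ⊢
    linarith [h2]
  have e1 : ∑ k ∈ Icc 1 (m+1), (-1:ℝ)^(k+1)/(k:ℝ)^(j+1) * (m.choose k : ℝ)
      = ∑ k ∈ Icc 1 m, (-1:ℝ)^(k+1)/(k:ℝ)^(j+1) * (m.choose k : ℝ) := by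
    rw [show Icc 1 (m+1) = insert (m+1) (Icc 1 m) from by ext x; simp; omega,
      Finset.sum_insert (by simp)]
    simp [Nat.choose_succ_self]
  have e2 : ∑ k ∈ Icc 1 (m+1), ((-1:ℝ)^(k+1)/(k:ℝ)^j * ((m+1).choose k : ℝ))/((m:ℝ)+1)
      = (∑ k ∈ Icc 1 (m+1), (-1:ℝ)^(k+1)/(k:ℝ)^j * ((m+1).choose k : ℝ))/((m:ℝ)+1) := by
    rw [← Finset.sum_div]
  rw [Finset.sum_congr rfl h1, Finset.sum_add_distrib, e1, e2]

lemma Saux_one (j : ℕ) : Saux j 1 = 1 := by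
  unfold Saux
  rw [show Icc 1 1 = {1} from rfl, Finset.sum_singleton]
  norm_num

lemma Saux_succ (j m : ℕ) (hm : 1 ≤ m) :
    Saux (j + 1) m = ∑ k ∈ Finset.Icc 1 m, Saux j k / (k : ℝ) := by
  induction m with
  | zero => omega
  | succ m ih =>
    rcases Nat.eq_zero_or_pos m with rfl | hm1
    · rw [show Icc 1 (0+1) = {1} from rfl, Finset.sum_singleton, Saux_one, Saux_one]
      norm_num
    · rw [Saux_succ_diff, ih hm1,
        show Icc 1 (m+1) = insert (m+1) (Icc 1 m) from by ext x; simp; omega,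
        Finset.sum_insert (by simp)]
      push_cast
      ring

lemma Saux_eq_Taux (j m : ℕ) (hm : 1 ≤ m) : Saux j m = Taux j m := by
  induction j generalizing m with
  | zero => rw [Saux_zero m hm]; rfl
  | succ j ih =>
    rw [Saux_succ j m hm]
    show _ = ∑ k ∈ Finset.Icc 1 m, Taux j k / (k : ℝ)
    refine Finset.sum_congr rfl fun k hk => ?_
    simp only [mem_Icc] at hk
    rw [ih k hk.1]

lemma monotone_snoc {j : ℕ} (g : Fin j → ℕ) (k : ℕ) (hg : Monotone g)
    (hb : ∀ i, g i ≤ k) : Monotone (Fin.snoc g k) := by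
  intro a b hab
  induction b using Fin.lastCases with
  | last =>
    induction a using Fin.lastCases with
    | last => exact le_refl _
    | cast i => rw [Fin.snoc_castSucc, Fin.snoc_last]; exact hb i
  | cast bi =>
    induction a using Fin.lastCases with
    | last => exact absurd hab (not_le.2 (Fin.castSucc_lt_last bi))
    | cast ai =>
      rw [Fin.snoc_castSucc, Fin.snoc_castSucc]
      exact hg (Fin.castSucc_le_castSucc_iff.mp hab)

instance subFinite (j m : ℕ) :
    Finite {f : Fin j → ℕ // Monotone f ∧ ∀ i, 1 ≤ f i ∧ f i ≤ m} := by
  refine Finite.of_injective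
    (fun f => (fun i => (⟨f.1 i, by have := (f.2.2 i).2; omega⟩ : Fin (m+1)))) ?_
  intro f g h
  ext i
  exact congrArg Fin.val (congrFun h i)

noncomputable def subEquiv (j m : ℕ) :
    {f : Fin (j+1) → ℕ // Monotone f ∧ ∀ i, 1 ≤ f i ∧ f i ≤ m} ≃
    (Σ k : (Finset.Icc 1 m), {g : Fin j → ℕ // Monotone g ∧ ∀ i, 1 ≤ g i ∧ g i ≤ (k:ℕ)}) where
  toFun f := ⟨⟨f.1 (Fin.last j), by
      simp only [Finset.mem_Icc]; exact ⟨(f.2.2 _).1, (f.2.2 _).2⟩⟩,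
    ⟨Fin.init f.1, fun a b hab => f.2.1 (Fin.castSucc_le_castSucc_iff.mpr hab),
      fun i => ⟨(f.2.2 _).1, f.2.1 (Fin.le_last _)⟩⟩⟩
  invFun x := ⟨Fin.snoc x.2.1 (x.1 : ℕ),
    monotone_snoc _ _ x.2.2.1 (fun i => (x.2.2.2 i).2),
    fun i => by
      induction i using Fin.lastCases with
      | last =>
        rw [Fin.snoc_last]
        have := x.1.2; simp only [Finset.mem_Icc] at this; exact this
      | cast i =>
        rw [Fin.snoc_castSucc]
        have h1 := x.2.2.2 i
        have := x.1.2; simp only [Finset.mem_Icc] at this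
        exact ⟨h1.1, le_trans h1.2 this.2⟩⟩
  left_inv f := by
    apply Subtype.ext
    exact Fin.snoc_init_self f.1
  right_inv x := by
    obtain ⟨⟨k, hk⟩, ⟨g, hg⟩⟩ := x
    have h1 : (Fin.snoc g k : Fin (j+1) → ℕ) (Fin.last j) = k := by simp only [Fin.snoc_last]
    refine Sigma.ext ?_ ?_
    · exact Subtype.ext h1
    refine (Subtype.heq_iff_coe_eq ?_).mpr (by simp only [Fin.init_snoc])
    intro y
    simp only []
    simp [Fin.snoc_last]

lemma tsum_eq_Taux (j m : ℕ) :
    ∑' f : {f : Fin j → ℕ // Monotone f ∧ ∀ i, 1 ≤ f i ∧ f i ≤ m}, ∏ i, 1 / (f.1 i : ℝ)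
      = Taux j m := by
  induction j generalizing m with
  | zero =>
    haveI : Unique {f : Fin 0 → ℕ // Monotone f ∧ ∀ i, 1 ≤ f i ∧ f i ≤ m} :=
      ⟨⟨⟨fun i => i.elim0, fun a b _ => a.elim0, fun i => i.elim0⟩⟩,
        fun a => Subtype.ext (funext fun i => i.elim0)⟩
    rw [tsum_eq_single default (fun b hb => absurd (Subsingleton.elim b default) hb)]
    show (1 : ℝ) = Taux 0 m
    rfl
  | succ j ih =>
    have e := (subEquiv j m).symm.tsum_eq
      (f := fun f : {f : Fin (j+1) → ℕ // Monotone f ∧ ∀ i, 1 ≤ f i ∧ f i ≤ m} =>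
        ∏ i, 1 / (f.1 i : ℝ))
    rw [← e, Summable.tsum_sigma Summable.of_finite]
    have inner : ∀ k : (Finset.Icc 1 m : Finset ℕ),
        (∑' g : {g : Fin j → ℕ // Monotone g ∧ ∀ i, 1 ≤ g i ∧ g i ≤ (k:ℕ)},
          (∏ i, 1 / ((((subEquiv j m).symm ⟨k, g⟩).1 i : ℕ) : ℝ)))
          = Taux j (k:ℕ) / ((k:ℕ) : ℝ) := by
      intro k
      have hterm : ∀ g : {g : Fin j → ℕ // Monotone g ∧ ∀ i, 1 ≤ g i ∧ g i ≤ (k:ℕ)},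
          (∏ i, 1 / ((((subEquiv j m).symm ⟨k, g⟩).1 i : ℕ) : ℝ))
            = (∏ i, 1 / ((g.1 i : ℕ) : ℝ)) * (1 / ((k:ℕ) : ℝ)) := by
        intro g
        show (∏ i : Fin (j+1), 1 / (((Fin.snoc g.1 (k:ℕ) : Fin (j+1) → ℕ) i : ℕ) : ℝ)) = _
        rw [Fin.prod_univ_castSucc]
        simp only [Fin.snoc_castSucc, Fin.snoc_last]
      rw [tsum_congr hterm, tsum_mul_right, ih]
      rw [div_eq_mul_inv]; ring
    rw [tsum_congr inner, Finset.tsum_subtype (Finset.Icc 1 m) (fun k => Taux j k / (k:ℝ))]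
    rfl

/-- For every positive integer `j` and every integer `n ≥ 2`,
`Σ_{k=1}^{n-1} ((-1)^{k+1}/k^j) C(n-1, k) = Σ_{1 ≤ k_1 ≤ … ≤ k_j ≤ n-1} 1/(k_1 ⋯ k_j)`,
where the right-hand sum extends over all nondecreasing `j`-tuples of integers
between `1` and `n-1`. -/
theorem stmt_12 (j n : ℕ) (hj : 1 ≤ j) (hn : 2 ≤ n) :
    ∑ k ∈ Finset.Icc 1 (n - 1), ((-1 : ℝ) ^ (k + 1) / (k : ℝ) ^ j) * ((n - 1).choose k : ℝ)
      = ∑' f : {f : Fin j → ℕ // Monotone f ∧ ∀ i, 1 ≤ f i ∧ f i ≤ n - 1},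
          ∏ i, 1 / (f.1 i : ℝ) := by
  have h1 : 1 ≤ n - 1 := by omega
  rw [show (∑ k ∈ Finset.Icc 1 (n - 1), ((-1 : ℝ) ^ (k + 1) / (k : ℝ) ^ j) * ((n - 1).choose k : ℝ))
      = Saux j (n-1) from rfl, Saux_eq_Taux j (n-1) h1, ← tsum_eq_Taux j (n-1)]
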